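/- For all i, j ∈ ℤ with (i, j) ≠ (0, 0) and every s ∈ I_{i,j}: s ∈ I_i; moreover f(s) ∈ I_j if i ≥ 0, while f(s) ∈ I_{−j} if i < 0. -/
import Mathlib


noncomputable section

/-- `β = √2 - 1`. -/
def β : ℝ := Real.sqrt 2 - 1

/-- `ω = √2 + 1`. -/
def ω : ℝ := Real.sqrt 2 + 1

/-- The break points `Δ_i`. -/
def Δ (i : ℤ) : ℝ :=
  if i < 0 then β ^ i.natAbs
  else if i = 0 then β
  else Real.sqrt 2 - β ^ i.natAbs

/-- The intervals `I_i`. -/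
def Iint (i : ℤ) : Set ℝ :=
  if i < 0 then Set.Ioc (Δ (i - 1)) (Δ i)
  else if i = 0 then Set.Ioo β 1
  else Set.Ico (Δ i) (Δ (i + 1))

/-- The defining formula of `f` on the interval `I_i`. -/
def fval (i : ℤ) (s : ℝ) : ℝ :=
  if i < 0 then ω ^ (i.natAbs + 1) * (Δ i - s)
  else if i = 0 then ω * (s - β)
  else ω ^ (i.natAbs + 1) * (s - Δ i)

/-- `f` is the renormalization map: `f 0 = f √2 = 0` and on each interval `I_i`
    it is given by the corresponding affine formula. These conditions determine
    `f` uniquely on `[0, √2]`. -/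
def IsLuroth (f : ℝ → ℝ) : Prop :=
  f 0 = 0 ∧ f (Real.sqrt 2) = 0 ∧ ∀ i : ℤ, ∀ s ∈ Iint i, f s = fval i s

/-- `ℚ(√2)` as a subset of `ℝ`. -/
def QSqrt2 : Set ℝ := {x | ∃ a b : ℚ, x = (a : ℝ) + (b : ℝ) * Real.sqrt 2}

/-- `ℤ[√2]` as a subset of `ℝ`. -/
def ZSqrt2 : Set ℝ := {x | ∃ m n : ℤ, x = (m : ℝ) + (n : ℝ) * Real.sqrt 2}

/-- `M_d = {s ∈ [0,√2] : d·s ∈ ℤ[√2]}`. -/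
def Mset (d : ℤ) : Set ℝ :=
  {s | s ∈ Set.Icc 0 (Real.sqrt 2) ∧ (d : ℝ) * s ∈ ZSqrt2}

/-- Base case of `Δ_{i,j}` (for `i ≤ 0`): the two explicit formulas. -/
def Δ2base (i j : ℤ) : ℝ :=
  if j ≤ 0 then β ^ (i.natAbs + 1) + β ^ (i.natAbs + j.natAbs + 1)
  else β ^ i.natAbs - β ^ (i.natAbs + j.natAbs + 1)

/-- The break points `Δ_{i,j}`. -/
def Δ2 (i j : ℤ) : ℝ :=
  if 0 < i ∨ (i = 0 ∧ 0 < j) then Real.sqrt 2 - Δ2base (-i) (-j)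
  else Δ2base i j

/-- The intervals `I_{i,j}`. -/
def I2 (i j : ℤ) : Set ℝ :=
  if j < 0 then Set.Ioc (Δ2 i (j - 1)) (Δ2 i j)
  else if j = 0 then
    (if i < 0 then Set.Ioo (Δ2 i (-1)) (Δ2 i 0) else Set.Ioo (Δ2 i 0) (Δ2 i 1))
  else Set.Ico (Δ2 i j) (Δ2 i (j + 1))

lemma hr2 : Real.sqrt 2 ^ 2 = 2 := Real.sq_sqrt (by norm_num)

lemma hr_gt : 1 < Real.sqrt 2 := by nlinarith [hr2, Real.sqrt_nonneg 2]

lemma hr_lt : Real.sqrt 2 < 3/2 := by nlinarith [hr2, Real.sqrt_nonneg 2]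

lemma hb0 : 0 < β := by unfold β; linarith [hr_gt]

lemma hbh : β < 1/2 := by unfold β; linarith [hr_lt]

lemma hb1' : β < 1 := by linarith [hbh]

lemma hrb : Real.sqrt 2 = β + 1 := by unfold β; ring

lemma hw0 : 0 < ω := by unfold ω; linarith [hr_gt]

lemma hwb : ω * β = 1 := by unfold ω β; nlinarith [hr2]

lemma hbsum : β + β^2 < 1 := by nlinarith [hb0, hbh]

lemma keyt (n t m : ℕ) (h : m = n + t + 1) : ω^(n+1) * β^m = β^t := by
  subst h
  calc ω^(n+1) * β^(n+t+1) = (ω*β)^(n+1) * β^t := by ring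
    _ = β^t := by rw [hwb, one_pow, one_mul]

lemma key1 (n k m : ℕ) (h : m = n + k + 1) :
    ω^(n+1) * (β^n - β^(n+1) - β^m) = Real.sqrt 2 - β^k := by
  subst h
  have e1 : ω^(n+1) * β^n = ω := by
    have : ω^n * β^n = 1 := by rw [← mul_pow, hwb, one_pow]
    calc ω^(n+1)*β^n = ω * (ω^n * β^n) := by ring
      _ = ω := by rw [this, mul_one]
  have e2 : ω^(n+1) * β^(n+1) = 1 := by rw [← mul_pow, hwb, one_pow]
  have e3 := keyt n k (n+k+1) rfl
  have e4 : ω^(n+1) * (β^n - β^(n+1) - β^(n+k+1)) = ω - 1 - β^k := by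
    rw [mul_sub, mul_sub, e1, e2, e3]
  rw [e4]; unfold ω; ring

lemma ineq1 (n k m : ℕ) (hk : 1 ≤ k) (h : m = n + k + 1) : β^(n+1) + β^m < β^n := by
  subst h
  have h1 : β^(n+k+1) ≤ β^(n+2) := pow_le_pow_of_le_one hb0.le hb1'.le (by omega)
  have h2 : (0:ℝ) < β^n := pow_pos hb0 n
  have e1 : β^(n+1) = β^n * β := pow_succ β n
  have e2 : β^(n+2) = β^n * β^2 := by ring
  nlinarith [hbsum]

lemma ineq2 (n : ℕ) : 2*β^(n+1) < β^n := by
  have h2 : (0:ℝ) < β^n := pow_pos hb0 n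
  have e1 : β^(n+1) = β^n * β := pow_succ β n
  nlinarith [hbh]

lemma Δ_neg (n : ℕ) (hn : 0 < n) : Δ (-(n:ℤ)) = β^n := by
  unfold Δ; rw [if_pos (by omega : -(n:ℤ) < 0)]; simp

lemma Δ_pos (n : ℕ) (hn : 0 < n) : Δ (n:ℤ) = Real.sqrt 2 - β^n := by
  unfold Δ
  rw [if_neg (by omega : ¬ ((n:ℤ) < 0)), if_neg (by omega : ¬ ((n:ℤ) = 0))]
  simp

lemma Iint_neg (n : ℕ) (hn : 0 < n) : Iint (-(n:ℤ)) = Set.Ioc (β^(n+1)) (β^n) := by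
  unfold Iint
  rw [if_pos (by omega : -(n:ℤ) < 0),
    show -(n:ℤ) - 1 = -((n+1:ℕ):ℤ) by push_cast; ring,
    Δ_neg n hn, Δ_neg (n+1) (by omega)]

lemma Iint_zero : Iint 0 = Set.Ioo β 1 := by simp [Iint]

lemma Iint_pos (n : ℕ) (hn : 0 < n) :
    Iint (n:ℤ) = Set.Ico (Real.sqrt 2 - β^n) (Real.sqrt 2 - β^(n+1)) := by
  unfold Iint
  rw [if_neg (by omega : ¬ ((n:ℤ) < 0)), if_neg (by omega : ¬ ((n:ℤ) = 0)),
    show (n:ℤ) + 1 = ((n+1:ℕ):ℤ) by push_cast; ring,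
    Δ_pos n hn, Δ_pos (n+1) (by omega)]

lemma Δ2_nn (n k : ℕ) : Δ2 (-(n:ℤ)) (-(k:ℤ)) = β^(n+1) + β^(n+k+1) := by
  unfold Δ2 Δ2base
  rw [if_neg (by omega : ¬ (0 < -(n:ℤ) ∨ (-(n:ℤ) = 0 ∧ 0 < -(k:ℤ)))),
    if_pos (by omega : -(k:ℤ) ≤ 0)]
  simp

lemma Δ2_np (n k : ℕ) (hn : 0 < n) (hk : 0 < k) :
    Δ2 (-(n:ℤ)) (k:ℤ) = β^n - β^(n+k+1) := by
  unfold Δ2 Δ2base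
  rw [if_neg (by omega : ¬ (0 < -(n:ℤ) ∨ (-(n:ℤ) = 0 ∧ 0 < (k:ℤ)))),
    if_neg (by omega : ¬ ((k:ℤ) ≤ 0))]
  simp

lemma Δ2_zn (k : ℕ) : Δ2 0 (-(k:ℤ)) = β + β^(k+1) := by
  have h := Δ2_nn 0 k
  rw [show -((0:ℕ):ℤ) = 0 by norm_num, show (0:ℕ)+1 = 1 by omega,
    show (0:ℕ)+k+1 = k+1 by omega, pow_one] at h
  exact h

lemma Δ2_zp (k : ℕ) (hk : 0 < k) : Δ2 0 (k:ℤ) = Real.sqrt 2 - β - β^(k+1) := by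
  unfold Δ2 Δ2base
  rw [if_pos (Or.inr ⟨rfl, by omega⟩), if_pos (by omega : -(k:ℤ) ≤ 0)]
  simp
  ring

lemma Δ2_pn (n k : ℕ) (hn : 0 < n) (hk : 0 < k) :
    Δ2 (n:ℤ) (-(k:ℤ)) = Real.sqrt 2 - β^n + β^(n+k+1) := by
  unfold Δ2 Δ2base
  rw [if_pos (Or.inl (by omega : (0:ℤ) < (n:ℤ))),
    if_neg (by omega : ¬ (- -(k:ℤ) ≤ 0))]
  simp
  ring

lemma Δ2_pp (n k : ℕ) (hn : 0 < n) :
    Δ2 (n:ℤ) (k:ℤ) = Real.sqrt 2 - β^(n+1) - β^(n+k+1) := by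
  unfold Δ2 Δ2base
  rw [if_pos (Or.inl (by omega : (0:ℤ) < (n:ℤ))),
    if_pos (by omega : -(k:ℤ) ≤ 0)]
  simp
  ring

lemma fval_neg (n : ℕ) (hn : 0 < n) (s : ℝ) :
    fval (-(n:ℤ)) s = ω^(n+1) * (β^n - s) := by
  unfold fval
  rw [if_pos (by omega : -(n:ℤ) < 0), Δ_neg n hn]
  simp

lemma fval_zero (s : ℝ) : fval 0 s = ω * (s - β) := by simp [fval]

lemma fval_pos (n : ℕ) (hn : 0 < n) (s : ℝ) :
    fval (n:ℤ) s = ω^(n+1) * (s - (Real.sqrt 2 - β^n)) := by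
  unfold fval
  rw [if_neg (by omega : ¬ ((n:ℤ) < 0)), if_neg (by omega : ¬ ((n:ℤ) = 0)), Δ_pos n hn]
  simp
lemma keyw (t m : ℕ) (h : m = t + 1) : ω * β^m = β^t := by
  subst h
  calc ω * β^(t+1) = (ω*β)*β^t := by ring
    _ = β^t := by rw [hwb, one_mul]

lemma keyw1 (k m : ℕ) (h : m = k + 1) : ω * (1 - β - β^m) = Real.sqrt 2 - β^k := by
  subst h
  rw [mul_sub, mul_sub, mul_one, hwb, keyw k (k+1) rfl]
  unfold ω; ring

lemma Δ2_n0 (n : ℕ) : Δ2 (-(n:ℤ)) 0 = β^(n+1) + β^(n+1) := by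
  have h := Δ2_nn n 0
  rw [show -((0:ℕ):ℤ) = 0 by norm_num, show n+0+1 = n+1 by omega] at h
  exact h

lemma Δ2_n1 (n : ℕ) : Δ2 (-(n:ℤ)) (-1) = β^(n+1) + β^(n+2) := by
  have h := Δ2_nn n 1
  rw [show -((1:ℕ):ℤ) = -1 by norm_num, show n+1+1 = n+2 by omega] at h
  exact h

lemma Δ2_p0 (n : ℕ) (hn : 0 < n) : Δ2 (n:ℤ) 0 = Real.sqrt 2 - β^(n+1) - β^(n+1) := by
  have h := Δ2_pp n 0 hn
  rw [show ((0:ℕ):ℤ) = 0 by norm_num, show n+0+1 = n+1 by omega] at h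
  exact h

lemma Δ2_p1 (n : ℕ) (hn : 0 < n) : Δ2 (n:ℤ) 1 = Real.sqrt 2 - β^(n+1) - β^(n+2) := by
  have h := Δ2_pp n 1 hn
  rw [show ((1:ℕ):ℤ) = 1 by norm_num, show n+1+1 = n+2 by omega] at h
  exact h
/-- for `(i,j) ≠ (0,0)` and `s ∈ I_{i,j}`, one has `s ∈ I_i`;
moreover `f s ∈ I_j` if `i ≥ 0`, and `f s ∈ I_{-j}` if `i < 0`. -/

theorem I2_refines_Iint (f : ℝ → ℝ) (hf : IsLuroth f) :
    ∀ i j : ℤ, ¬(i = 0 ∧ j = 0) → ∀ s ∈ I2 i j,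
      s ∈ Iint i ∧
      (0 ≤ i → f s ∈ Iint j) ∧
      (i < 0 → f s ∈ Iint (-j)) := by
  obtain ⟨-, -, hfe⟩ := hf
  intro i j hij s hs
  rcases lt_trichotomy i 0 with hi | rfl | hi
  · -- i < 0
    obtain ⟨n, hn, rfl⟩ : ∃ n : ℕ, 0 < n ∧ i = -(n:ℤ) := ⟨i.natAbs, by omega, by omega⟩
    rcases lt_trichotomy j 0 with hj | rfl | hj
    · -- j < 0
      obtain ⟨k, hk, rfl⟩ : ∃ k : ℕ, 0 < k ∧ j = -(k:ℤ) := ⟨j.natAbs, by omega, by omega⟩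
      rw [I2, if_pos (by omega : -(k:ℤ) < 0),
        show -(k:ℤ) - 1 = -((k+1:ℕ):ℤ) by push_cast; ring,
        Δ2_nn n (k+1), Δ2_nn n k] at hs
      obtain ⟨hs1, hs2⟩ := hs
      have hsI : s ∈ Iint (-(n:ℤ)) := by
        rw [Iint_neg n hn, Set.mem_Ioc]
        exact ⟨by nlinarith [pow_pos hb0 (n+(k+1)+1)],
               by nlinarith [ineq1 n k (n+k+1) hk rfl]⟩
      refine ⟨hsI, fun h => absurd h (by omega), fun _ => ?_⟩
      rw [hfe _ s hsI, fval_neg n hn, neg_neg, Iint_pos k hk, Set.mem_Ico]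
      exact ⟨by nlinarith [key1 n k (n+k+1) rfl, pow_pos hw0 (n+1)],
             by nlinarith [key1 n (k+1) (n+(k+1)+1) rfl, pow_pos hw0 (n+1)]⟩
    · -- j = 0
      rw [I2, if_neg (by norm_num : ¬ (0:ℤ) < 0), if_pos rfl,
        if_pos (by omega : -(n:ℤ) < 0), Δ2_n1 n, Δ2_n0 n] at hs
      obtain ⟨hs1, hs2⟩ := hs
      have hsI : s ∈ Iint (-(n:ℤ)) := by
        rw [Iint_neg n hn, Set.mem_Ioc]
        exact ⟨by nlinarith [pow_pos hb0 (n+2)], by nlinarith [ineq2 n]⟩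
      refine ⟨hsI, fun h => absurd h (by omega), fun _ => ?_⟩
      rw [hfe _ s hsI, fval_neg n hn, neg_zero, Iint_zero, Set.mem_Ioo]
      have e0 := key1 n 0 (n+0+1) rfl
      have e1 := key1 n 1 (n+1+1) rfl
      rw [show n+0+1 = n+1 by omega] at e0
      rw [show n+1+1 = n+2 by omega] at e1
      norm_num at e0 e1
      exact ⟨by nlinarith [pow_pos hw0 (n+1), hrb],
             by nlinarith [pow_pos hw0 (n+1), hrb]⟩
    · -- j > 0
      obtain ⟨k, hk, rfl⟩ : ∃ k : ℕ, 0 < k ∧ j = (k:ℤ) := ⟨j.natAbs, by omega, by omega⟩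
      rw [I2, if_neg (by omega : ¬ (k:ℤ) < 0), if_neg (by omega : ¬ (k:ℤ) = 0),
        show (k:ℤ) + 1 = ((k+1:ℕ):ℤ) by push_cast; ring,
        Δ2_np n k hn hk, Δ2_np n (k+1) hn (by omega)] at hs
      obtain ⟨hs1, hs2⟩ := hs
      have hsI : s ∈ Iint (-(n:ℤ)) := by
        rw [Iint_neg n hn, Set.mem_Ioc]
        exact ⟨by nlinarith [ineq1 n k (n+k+1) hk rfl],
               by nlinarith [pow_pos hb0 (n+(k+1)+1)]⟩
      refine ⟨hsI, fun h => absurd h (by omega), fun _ => ?_⟩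
      rw [hfe _ s hsI, fval_neg n hn, Iint_neg k hk, Set.mem_Ioc]
      exact ⟨by nlinarith [keyt n (k+1) (n+(k+1)+1) rfl, pow_pos hw0 (n+1)],
             by nlinarith [keyt n k (n+k+1) rfl, pow_pos hw0 (n+1)]⟩
  · -- i = 0
    rcases lt_trichotomy j 0 with hj | rfl | hj
    · -- j < 0
      obtain ⟨k, hk, rfl⟩ : ∃ k : ℕ, 0 < k ∧ j = -(k:ℤ) := ⟨j.natAbs, by omega, by omega⟩
      rw [I2, if_pos (by omega : -(k:ℤ) < 0),
        show -(k:ℤ) - 1 = -((k+1:ℕ):ℤ) by push_cast; ring,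
        Δ2_zn (k+1), Δ2_zn k] at hs
      obtain ⟨hs1, hs2⟩ := hs
      have hsI : s ∈ Iint 0 := by
        rw [Iint_zero, Set.mem_Ioo]
        constructor
        · nlinarith [pow_pos hb0 (k+1+1)]
        · have : β^(k+1) ≤ β^2 := pow_le_pow_of_le_one hb0.le hb1'.le (by omega)
          nlinarith [hbsum]
      refine ⟨hsI, fun _ => ?_, fun h => absurd h (by omega)⟩
      rw [hfe _ s hsI, fval_zero, Iint_neg k hk, Set.mem_Ioc]
      exact ⟨by nlinarith [keyw (k+1) (k+1+1) rfl, hw0],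
             by nlinarith [keyw k (k+1) rfl, hw0]⟩
    · exact absurd ⟨rfl, rfl⟩ hij
    · -- j > 0
      obtain ⟨k, hk, rfl⟩ : ∃ k : ℕ, 0 < k ∧ j = (k:ℤ) := ⟨j.natAbs, by omega, by omega⟩
      rw [I2, if_neg (by omega : ¬ (k:ℤ) < 0), if_neg (by omega : ¬ (k:ℤ) = 0),
        show (k:ℤ) + 1 = ((k+1:ℕ):ℤ) by push_cast; ring,
        Δ2_zp k hk, Δ2_zp (k+1) (by omega)] at hs
      obtain ⟨hs1, hs2⟩ := hs
      have hsI : s ∈ Iint 0 := by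
        rw [Iint_zero, Set.mem_Ioo]
        constructor
        · have : β^(k+1) ≤ β^2 := pow_le_pow_of_le_one hb0.le hb1'.le (by omega)
          nlinarith [hbsum, hrb]
        · nlinarith [pow_pos hb0 (k+1+1), hrb]
      refine ⟨hsI, fun _ => ?_, fun h => absurd h (by omega)⟩
      rw [hfe _ s hsI, fval_zero, Iint_pos k hk, Set.mem_Ico]
      exact ⟨by nlinarith [keyw1 k (k+1) rfl, hw0, hrb],
             by nlinarith [keyw1 (k+1) (k+1+1) rfl, hw0, hrb]⟩
  · -- i > 0
    obtain ⟨n, hn, rfl⟩ : ∃ n : ℕ, 0 < n ∧ i = (n:ℤ) := ⟨i.natAbs, by omega, by omega⟩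
    rcases lt_trichotomy j 0 with hj | rfl | hj
    · -- j < 0
      obtain ⟨k, hk, rfl⟩ : ∃ k : ℕ, 0 < k ∧ j = -(k:ℤ) := ⟨j.natAbs, by omega, by omega⟩
      rw [I2, if_pos (by omega : -(k:ℤ) < 0),
        show -(k:ℤ) - 1 = -((k+1:ℕ):ℤ) by push_cast; ring,
        Δ2_pn n (k+1) hn (by omega), Δ2_pn n k hn hk] at hs
      obtain ⟨hs1, hs2⟩ := hs
      have hsI : s ∈ Iint (n:ℤ) := by
        rw [Iint_pos n hn, Set.mem_Ico]
        exact ⟨by nlinarith [pow_pos hb0 (n+(k+1)+1)],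
               by nlinarith [ineq1 n k (n+k+1) hk rfl]⟩
      refine ⟨hsI, fun _ => ?_, fun h => absurd h (by omega)⟩
      rw [hfe _ s hsI, fval_pos n hn, Iint_neg k hk, Set.mem_Ioc]
      exact ⟨by nlinarith [keyt n (k+1) (n+(k+1)+1) rfl, pow_pos hw0 (n+1)],
             by nlinarith [keyt n k (n+k+1) rfl, pow_pos hw0 (n+1)]⟩
    · -- j = 0
      rw [I2, if_neg (by norm_num : ¬ (0:ℤ) < 0), if_pos rfl,
        if_neg (by omega : ¬ (n:ℤ) < 0), Δ2_p0 n hn, Δ2_p1 n hn] at hs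
      obtain ⟨hs1, hs2⟩ := hs
      have hsI : s ∈ Iint (n:ℤ) := by
        rw [Iint_pos n hn, Set.mem_Ico]
        exact ⟨by nlinarith [ineq2 n], by nlinarith [pow_pos hb0 (n+2)]⟩
      refine ⟨hsI, fun _ => ?_, fun h => absurd h (by omega)⟩
      rw [hfe _ s hsI, fval_pos n hn, Iint_zero, Set.mem_Ioo]
      have e0 := key1 n 0 (n+0+1) rfl
      have e1 := key1 n 1 (n+1+1) rfl
      rw [show n+0+1 = n+1 by omega] at e0
      rw [show n+1+1 = n+2 by omega] at e1
      norm_num at e0 e1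
      exact ⟨by nlinarith [pow_pos hw0 (n+1), hrb],
             by nlinarith [pow_pos hw0 (n+1), hrb]⟩
    · -- j > 0
      obtain ⟨k, hk, rfl⟩ : ∃ k : ℕ, 0 < k ∧ j = (k:ℤ) := ⟨j.natAbs, by omega, by omega⟩
      rw [I2, if_neg (by omega : ¬ (k:ℤ) < 0), if_neg (by omega : ¬ (k:ℤ) = 0),
        show (k:ℤ) + 1 = ((k+1:ℕ):ℤ) by push_cast; ring,
        Δ2_pp n k hn, Δ2_pp n (k+1) hn] at hs
      obtain ⟨hs1, hs2⟩ := hs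
      have hsI : s ∈ Iint (n:ℤ) := by
        rw [Iint_pos n hn, Set.mem_Ico]
        exact ⟨by nlinarith [ineq1 n k (n+k+1) hk rfl],
               by nlinarith [pow_pos hb0 (n+(k+1)+1)]⟩
      refine ⟨hsI, fun _ => ?_, fun h => absurd h (by omega)⟩
      rw [hfe _ s hsI, fval_pos n hn, Iint_pos k hk, Set.mem_Ico]
      exact ⟨by nlinarith [key1 n k (n+k+1) rfl, pow_pos hw0 (n+1)],
             by nlinarith [key1 n (k+1) (n+(k+1)+1) rfl, pow_pos hw0 (n+1)]⟩
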